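/- For finite nonempty sets A, B, C in a commutative semigroup, |A + B + C|² ≤ |A + B| · |B + C| · |A + C|. -/
import Mathlib


open Pointwise

private lemma sqrt_helper (a b c d : ℝ) (ha : 0 ≤ a) (hb : 0 ≤ b) (hc : 0 ≤ c)
    (hd : 0 ≤ d) : Real.sqrt (a * b) + Real.sqrt (c * d) ≤ Real.sqrt ((a + c) * (b + d)) := by
  rw [Real.sqrt_mul ha, Real.sqrt_mul hc, Real.le_sqrt (by positivity) (by positivity)]
  have h1 := Real.sq_sqrt ha
  have h2 := Real.sq_sqrt hb
  have h3 := Real.sq_sqrt hc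
  have h4 := Real.sq_sqrt hd
  nlinarith [sq_nonneg (Real.sqrt a * Real.sqrt d - Real.sqrt c * Real.sqrt b),
    Real.sqrt_nonneg a, Real.sqrt_nonneg b, Real.sqrt_nonneg c, Real.sqrt_nonneg d,
    mul_nonneg (Real.sqrt_nonneg a) (Real.sqrt_nonneg b),
    mul_nonneg (Real.sqrt_nonneg c) (Real.sqrt_nonneg d)]

/-- The new elements of `A+B+c` inject into (new part of `A+c`) × (new part of `B+c`). -/
private lemma key_injection {α : Type*} [AddCommSemigroup α] [DecidableEq α]
    (A B C : Finset α) (c : α) :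
    ((A + B + {c}) \ (A + B + C)).card ≤
      ((A + {c}) \ (A + C)).card * ((B + {c}) \ (B + C)).card := by
  classical
  rw [← Finset.card_product]
  set w : α → α × α := fun s =>
    if h : ∃ p : α × α, p.1 ∈ A ∧ p.2 ∈ B ∧ p.1 + p.2 + c = s then h.choose else (c, c) with hw
  have hwspec : ∀ s ∈ A + B + {c},
      (w s).1 ∈ A ∧ (w s).2 ∈ B ∧ (w s).1 + (w s).2 + c = s := by
    intro s hs
    obtain ⟨y, hy, z, hz, rfl⟩ := Finset.mem_add.1 hs
    obtain ⟨a, ha, b, hb, rfl⟩ := Finset.mem_add.1 hy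
    rw [Finset.mem_singleton] at hz
    rw [hz]
    have hex : ∃ p : α × α, p.1 ∈ A ∧ p.2 ∈ B ∧ p.1 + p.2 + c = a + b + c :=
      ⟨(a, b), ha, hb, rfl⟩
    simp only [hw, dif_pos hex]
    exact hex.choose_spec
  apply Finset.card_le_card_of_injOn (fun s => ((w s).1 + c, (w s).2 + c))
  · intro s hs
    have hs1 := (Finset.mem_sdiff.1 hs).1
    have hs2 := (Finset.mem_sdiff.1 hs).2
    obtain ⟨ha, hb, heq⟩ := hwspec s hs1
    refine Finset.mem_product.2 ⟨Finset.mem_sdiff.2 ⟨?_, ?_⟩, Finset.mem_sdiff.2 ⟨?_, ?_⟩⟩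
    · exact Finset.add_mem_add ha (Finset.mem_singleton_self c)
    · intro hmem
      obtain ⟨a', ha', c', hc', hac⟩ := Finset.mem_add.1 hmem
      apply hs2
      have : s = a' + (w s).2 + c' := by
        calc s = (w s).1 + (w s).2 + c := heq.symm
          _ = (w s).2 + ((w s).1 + c) := by
            rw [add_comm ((w s).1) ((w s).2), add_assoc]
          _ = (w s).2 + (a' + c') := by rw [hac]
          _ = a' + (w s).2 + c' := by
            rw [← add_assoc, add_comm ((w s).2) a', add_assoc]
      rw [this]
      exact Finset.add_mem_add (Finset.add_mem_add ha' hb) hc'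
    · exact Finset.add_mem_add hb (Finset.mem_singleton_self c)
    · intro hmem
      obtain ⟨b', hb', c', hc', hbc⟩ := Finset.mem_add.1 hmem
      apply hs2
      have : s = (w s).1 + b' + c' := by
        calc s = (w s).1 + (w s).2 + c := heq.symm
          _ = (w s).1 + ((w s).2 + c) := add_assoc _ _ _
          _ = (w s).1 + (b' + c') := by rw [hbc]
          _ = (w s).1 + b' + c' := (add_assoc _ _ _).symm
      rw [this]
      exact Finset.add_mem_add (Finset.add_mem_add ha hb') hc'
  · intro s hs t ht hst
    have hs1 := (Finset.mem_sdiff.1 (by exact_mod_cast hs)).1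
    have ht1 := (Finset.mem_sdiff.1 (by exact_mod_cast ht)).1
    obtain ⟨has, hbs, heqs⟩ := hwspec s hs1
    obtain ⟨hat, hbt, heqt⟩ := hwspec t ht1
    have h1 : (w s).1 + c = (w t).1 + c := congrArg Prod.fst hst
    have h2 : (w s).2 + c = (w t).2 + c := congrArg Prod.snd hst
    calc s = (w s).1 + (w s).2 + c := heqs.symm
      _ = (w s).1 + ((w s).2 + c) := add_assoc _ _ _
      _ = (w s).1 + ((w t).2 + c) := by rw [h2]
      _ = (w t).2 + ((w s).1 + c) := by rw [add_comm ((w s).1), add_assoc, add_comm c]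
      _ = (w t).2 + ((w t).1 + c) := by rw [h1]
      _ = (w t).1 + (w t).2 + c := by
        rw [← add_assoc, add_comm ((w t).2) ((w t).1)]
      _ = t := heqt

private lemma sqrt_bound {α : Type*} [AddCommSemigroup α] [DecidableEq α]
    (A B : Finset α) (C : Finset α) :
    ((A + B + C).card : ℝ) ≤
      Real.sqrt (((A + B).card : ℝ) * ((A + C).card : ℝ) * ((B + C).card : ℝ)) := by
  classical
  induction C using Finset.induction_on with
  | empty => simp [Finset.add_empty, Real.sqrt_nonneg]
  | @insert c C' hc IH =>
    have hins : ∀ X : Finset α, X + insert c C' = (X + {c}) ∪ (X + C') := by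
      intro X
      rw [Finset.insert_eq, Finset.add_union]
    have hcardins : ∀ X : Finset α,
        (X + insert c C').card = ((X + {c}) \ (X + C')).card + (X + C').card := by
      intro X
      rw [hins X, Finset.card_sdiff_add_card]
    have hNK' : ((((A + B + {c}) \ (A + B + C')).card : ℝ)) ≤ (((A + B).card : ℝ)) := by
      have h1 : ((A + B + {c}) \ (A + B + C')).card ≤ (A + B + {c}).card :=
        Finset.card_le_card (Finset.sdiff_subset)
      have h2 : (A + B + {c}).card ≤ (A + B).card := by
        rw [Finset.add_singleton]
        exact Finset.card_image_le
      exact_mod_cast h1.trans h2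
    have hNxy' : ((((A + B + {c}) \ (A + B + C')).card : ℝ)) ≤
        ((((A + {c}) \ (A + C')).card : ℝ)) * ((((B + {c}) \ (B + C')).card : ℝ)) := by
      have := key_injection A B C' c
      exact_mod_cast this
    -- notation
    set K : ℝ := ((A + B).card : ℝ) with hK
    set p : ℝ := ((A + C').card : ℝ)
    set q : ℝ := ((B + C').card : ℝ)
    set x : ℝ := (((A + {c}) \ (A + C')).card : ℝ)
    set y : ℝ := (((B + {c}) \ (B + C')).card : ℝ)
    set N : ℝ := (((A + B + {c}) \ (A + B + C')).card : ℝ)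
    have hK0 : 0 ≤ K := Nat.cast_nonneg _
    have hp0 : 0 ≤ p := Nat.cast_nonneg _
    have hq0 : 0 ≤ q := Nat.cast_nonneg _
    have hx0 : 0 ≤ x := Nat.cast_nonneg _
    have hy0 : 0 ≤ y := Nat.cast_nonneg _
    have hN0 : 0 ≤ N := Nat.cast_nonneg _
    have hNK : N ≤ K := hNK'
    have hNxy : N ≤ x * y := hNxy'
    have hNsqrt : N ≤ Real.sqrt (K * x * y) := by
      rw [Real.le_sqrt hN0 (by positivity)]
      calc N ^ 2 = N * N := sq N
        _ ≤ K * (x * y) := mul_le_mul hNK hNxy hN0 hK0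
        _ = K * x * y := (mul_assoc _ _ _).symm
    have hcard1 : ((A + B + insert c C').card : ℝ) = N + ((A + B + C').card : ℝ) := by
      rw [hcardins (A + B)]; push_cast; ring
    have hcard2 : ((A + insert c C').card : ℝ) = x + p := by
      rw [hcardins A]; push_cast; ring
    have hcard3 : ((B + insert c C').card : ℝ) = y + q := by
      rw [hcardins B]; push_cast; ring
    rw [hcard1, hcard2, hcard3]
    calc N + ((A + B + C').card : ℝ)
        ≤ Real.sqrt (K * x * y) + Real.sqrt (K * p * q) := add_le_add hNsqrt IH
      _ = Real.sqrt ((K * x) * y) + Real.sqrt ((K * p) * q) := by ring_nf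
      _ ≤ Real.sqrt ((K * x + K * p) * (y + q)) :=
          sqrt_helper _ _ _ _ (by positivity) hy0 (by positivity) hq0
      _ = Real.sqrt (K * (x + p) * (y + q)) := by ring_nf

theorem submultiplicativity_three_sets {α : Type*} [AddCommSemigroup α] [DecidableEq α]
    (A B C : Finset α) (hA : A.Nonempty) (hB : B.Nonempty) (hC : C.Nonempty) :
    (A + B + C).card ^ 2 ≤ (A + B).card * (B + C).card * (A + C).card := by
  have h := sqrt_bound A B C
  have h2 : (((A + B + C).card : ℝ)) ^ 2 ≤
      ((A + B).card : ℝ) * ((A + C).card : ℝ) * ((B + C).card : ℝ) := by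
    rw [← Real.le_sqrt (Nat.cast_nonneg _) (by positivity)]
    exact h
  have h3 : (((A + B + C).card : ℝ)) ^ 2 ≤
      ((A + B).card : ℝ) * ((B + C).card : ℝ) * ((A + C).card : ℝ) := by
    linarith [h2]
  exact_mod_cast h3
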